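/- arXiv:1901.06131 — 2 statements merged into one kernel-verified Lean document; each statement's English description precedes it below -/
import Mathlib

section
/- Let 0 < μ < 1 and 0 < τ₁ < 1. There exists β > 0 such that τ₁^β ≥ 1/2 and (1-μ)/τ₁^β + μ/(4 τ₁^β) ≤ 1. Moreover, for any such β and any M > 0, r ∈ (0,1], and α ≥ β, one has (1-μ)(4 M r^β − M r^α) + M r^α ≤ 4 M (τ₁ r)^β. -/
theorem stmt_3 (μ τ₁ : ℝ) (hμ0 : 0 < μ) (hμ1 : μ < 1) (hτ₁0 : 0 < τ₁) (hτ₁1 : τ₁ < 1) :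
    (∃ β : ℝ, 0 < β ∧ τ₁ ^ β ≥ 1 / 2 ∧ (1 - μ) / τ₁ ^ β + μ / (4 * τ₁ ^ β) ≤ 1) ∧
    (∀ β : ℝ, 0 < β → τ₁ ^ β ≥ 1 / 2 → (1 - μ) / τ₁ ^ β + μ / (4 * τ₁ ^ β) ≤ 1 →
      ∀ M r α : ℝ, 0 < M → 0 < r → r ≤ 1 → β ≤ α →
        (1 - μ) * (4 * M * r ^ β - M * r ^ α) + M * r ^ α ≤ 4 * M * (τ₁ * r) ^ β) := by
  constructor
  · set c : ℝ := max (1/2) (1 - 3*μ/4) with hc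
    have hc0 : 0 < c := lt_of_lt_of_le (by norm_num) (le_max_left _ _)
    have hc1 : c < 1 := by
      apply max_lt (by norm_num); linarith
    refine ⟨Real.log c / Real.log τ₁, ?_, ?_, ?_⟩
    · apply div_pos_iff.mpr
      right
      exact ⟨Real.log_neg hc0 hc1, Real.log_neg hτ₁0 hτ₁1⟩
    · have : τ₁ ^ (Real.log c / Real.log τ₁) = c := by
        rw [Real.rpow_def_of_pos hτ₁0, mul_comm,
          div_mul_cancel₀ _ (ne_of_lt (Real.log_neg hτ₁0 hτ₁1)), Real.exp_log hc0]
      rw [this]; exact le_max_left _ _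
    · have h1 : τ₁ ^ (Real.log c / Real.log τ₁) = c := by
        rw [Real.rpow_def_of_pos hτ₁0, mul_comm,
          div_mul_cancel₀ _ (ne_of_lt (Real.log_neg hτ₁0 hτ₁1)), Real.exp_log hc0]
      rw [h1]
      have h2 : 1 - 3*μ/4 ≤ c := le_max_right _ _
      rw [div_add_div _ _ (ne_of_gt hc0) (by positivity), div_le_one (by positivity)]
      nlinarith
  · intro β hβ hhalf hineq M r α hM hr hr1 hβα
    have ht : 0 < τ₁ ^ β := Real.rpow_pos_of_pos hτ₁0 β
    have htb : 1 - 3*μ/4 ≤ τ₁ ^ β := by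
      rw [div_add_div _ _ (ne_of_gt ht) (by positivity), div_le_one (by positivity)] at hineq
      nlinarith
    have hra : r ^ α ≤ r ^ β := Real.rpow_le_rpow_of_exponent_ge hr hr1 hβα
    have hrb : 0 < r ^ β := Real.rpow_pos_of_pos hr β
    have hmul : (τ₁ * r) ^ β = τ₁ ^ β * r ^ β := Real.mul_rpow hτ₁0.le hr.le
    rw [hmul]
    nlinarith [mul_le_mul_of_nonneg_left hra (le_of_lt hM),
      mul_le_mul_of_nonneg_right (mul_le_mul_of_nonneg_left htb hM.le) hrb.le]
end

section
/- If a bounded domain Ω ⊂ ℝⁿ satisfies an exterior cone condition at x₀ ∈ ∂Ω — i.e., there is a closed solid cone C with vertex x₀, opening angle θ ∈ (0, π/2), and height h > 0 with C ⊂ Ωᶜ — then Ω satisfies the uniform condition at x₀: there exist 0 < τ₁ < τ₂ < 1, ν ∈ (0,1), and a positive sequence (r_k) with τ₁ r_{k-1} ≤ r_k ≤ τ₂ r_{k-1} such that for each k there is y_k ∈ ∂B(x₀, r_k) with ∂B(x₀, r_k) ∩ B(y_k, ν r_k) ⊂ Ωᶜ. -/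
open scoped RealInnerProductSpace

theorem stmt_6 (n : ℕ) (Ω : Set (EuclideanSpace ℝ (Fin n)))
    (hΩopen : IsOpen Ω) (hΩbdd : Bornology.IsBounded Ω)
    (x₀ : EuclideanSpace ℝ (Fin n)) (hx₀ : x₀ ∈ frontier Ω)
    (e : EuclideanSpace ℝ (Fin n)) (he : ‖e‖ = 1)
    (θ h : ℝ) (hθ0 : 0 < θ) (hθ : θ < Real.pi / 2) (hh : 0 < h)
    (hcone : {x : EuclideanSpace ℝ (Fin n) |
        ‖x - x₀‖ ≤ h ∧ ⟪x - x₀, e⟫ ≥ ‖x - x₀‖ * Real.cos θ} ⊆ Ωᶜ) :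
    ∃ (τ₁ τ₂ ν : ℝ) (r : ℕ → ℝ),
      0 < τ₁ ∧ τ₁ < τ₂ ∧ τ₂ < 1 ∧ 0 < ν ∧ ν < 1 ∧ (∀ k, 0 < r k) ∧
      (∀ k : ℕ, 1 ≤ k → τ₁ * r (k - 1) ≤ r k ∧ r k ≤ τ₂ * r (k - 1)) ∧
      (∀ k : ℕ, ∃ y ∈ Metric.sphere x₀ (r k),
        Metric.sphere x₀ (r k) ∩ Metric.ball y (ν * r k) ⊆ Ωᶜ) := by
  set c := Real.cos θ with hc
  have hπ := Real.pi_pos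
  have hc1 : c < 1 := by
    have h0 : Real.cos θ < Real.cos 0 := by
      apply Real.strictAntiOn_cos ⟨le_refl 0, Real.pi_pos.le⟩
        ⟨hθ0.le, by linarith⟩ hθ0
    simpa [hc] using h0
  have hc0 : 0 < c := Real.cos_pos_of_mem_Ioo ⟨by linarith, hθ⟩
  set ν : ℝ := min (Real.sqrt (2 * (1 - c))) (1 / 2) with hν
  have hs0 : 0 < Real.sqrt (2 * (1 - c)) := Real.sqrt_pos.mpr (by linarith)
  have hν0 : 0 < ν := lt_min hs0 (by norm_num)
  have hν1 : ν < 1 := lt_of_le_of_lt (min_le_right _ _) (by norm_num)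
  have hνsq : ν ^ 2 ≤ 2 * (1 - c) := by
    have h1 : ν ≤ Real.sqrt (2 * (1 - c)) := min_le_left _ _
    have := Real.sq_sqrt (show (0:ℝ) ≤ 2 * (1 - c) by linarith)
    nlinarith [hν0.le]
  refine ⟨1/4, 1/2, ν, fun k => h / 2 ^ (k + 1), by norm_num, by norm_num, by norm_num,
    hν0, hν1, fun k => by positivity, ?_, ?_⟩
  · intro k hk
    obtain ⟨m, rfl⟩ := Nat.exists_eq_add_of_le hk
    have : 1 + m - 1 = m := by omega
    rw [this]
    have e1 : h / 2 ^ (1 + m + 1) = (1 / 2) * (h / 2 ^ (m + 1)) := by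
      rw [show 1 + m + 1 = (m + 1) + 1 from by omega, pow_succ]
      ring
    have hp : (0:ℝ) < h / 2 ^ (m + 1) := by positivity
    constructor
    · show 1 / 4 * (h / 2 ^ (m + 1)) ≤ h / 2 ^ (1 + m + 1)
      rw [e1]; linarith
    · show h / 2 ^ (1 + m + 1) ≤ 1 / 2 * (h / 2 ^ (m + 1))
      rw [e1]
  · intro k
    set r : ℝ := h / 2 ^ (k + 1) with hr
    have hr0 : 0 < r := by positivity
    have hrh : r ≤ h := by
      rw [hr, div_le_iff₀ (by positivity)]
      nlinarith [one_le_pow₀ (show (1:ℝ) ≤ 2 by norm_num) (n := k + 1), hh.le]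
    refine ⟨x₀ + r • e, ?_, ?_⟩
    · simp [Metric.mem_sphere, dist_eq_norm, norm_smul, he, abs_of_pos hr0]
      exact hr
    · rintro x ⟨hxs, hxb⟩
      apply hcone
      have hxr : ‖x - x₀‖ = r := by
        rw [Metric.mem_sphere, dist_eq_norm] at hxs; exact hxs
      have hxy : ‖x - (x₀ + r • e)‖ < ν * r := by
        rw [Metric.mem_ball, dist_eq_norm] at hxb; exact hxb
      have key : ‖x - (x₀ + r • e)‖ ^ 2
          = ‖x - x₀‖ ^ 2 - 2 * (r * ⟪x - x₀, e⟫) + r ^ 2 := by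
        have : x - (x₀ + r • e) = (x - x₀) - r • e := by abel
        rw [this, norm_sub_sq_real, real_inner_smul_right, norm_smul, he,
          Real.norm_eq_abs, abs_of_pos hr0]
        ring
      have hsq : ‖x - (x₀ + r • e)‖ ^ 2 < ν ^ 2 * r ^ 2 := by
        have hn : 0 ≤ ‖x - (x₀ + r • e)‖ := norm_nonneg _
        nlinarith [mul_pos hν0 hr0]
      constructor
      · rw [hxr]; exact hrh
      · rw [hxr]
        rw [key, hxr] at hsq
        nlinarith [hr0]
end
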